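/- Let a > 1 and b > 1 be real numbers with a ≠ b. Define q : ℝ → ℝ by q(t) = (a - 1)·b^t - (b - 1)·a^t + b - a. Then the only real roots of q are t = 0 and t = 1. -/

import Mathlib

open Real Set

/-- For real `a, b > 1` with `a ≠ b`, the function
`q(t) = (a-1)·b^t - (b-1)·a^t + b - a` (real exponentials) vanishes only at `t = 0`
and `t = 1`. -/
theorem roots_of_q (a b : ℝ) (ha : 1 < a) (hb : 1 < b) (hab : a ≠ b) (t : ℝ) :
    (a - 1) * b ^ t - (b - 1) * a ^ t + b - a = 0 ↔ t = 0 ∨ t = 1 := by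
  have ha0 : (0:ℝ) < a := by linarith
  have hb0 : (0:ℝ) < b := by linarith
  have hla : 0 < Real.log a := Real.log_pos ha
  have hlb : 0 < Real.log b := Real.log_pos hb
  have hlab : Real.log a ≠ Real.log b := fun h =>
    hab (Real.log_injOn_pos (mem_Ioi.2 ha0) (mem_Ioi.2 hb0) h)
  set q : ℝ → ℝ := fun t => (a - 1) * b ^ t - (b - 1) * a ^ t + b - a with hqdef
  set q' : ℝ → ℝ := fun x => (a - 1) * (b ^ x * Real.log b) - (b - 1) * (a ^ x * Real.log a)
    with hq'def
  have hderiv : ∀ x : ℝ, HasDerivAt q (q' x) x := by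
    intro x
    have h1 := (hasStrictDerivAt_const_rpow hb0 x).hasDerivAt
    have h2 := (hasStrictDerivAt_const_rpow ha0 x).hasDerivAt
    have := ((h1.const_mul (a - 1)).sub (h2.const_mul (b - 1))).add_const (b - a)
    have hfun : q = fun x => (((fun y : ℝ => (a - 1) * b ^ y) - fun y : ℝ => (b - 1) * a ^ y) : ℝ → ℝ) x + (b - a) := by
      funext y; simp only [hqdef, Pi.sub_apply]; ring
    rw [hfun]; exact this
  -- uniqueness of the critical point
  have hcrit : ∀ c₁ c₂ : ℝ, q' c₁ = 0 → q' c₂ = 0 → c₁ = c₂ := by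
    have key : ∀ c : ℝ, q' c = 0 →
        Real.log (a - 1) + (c * Real.log b + Real.log (Real.log b)) =
        Real.log (b - 1) + (c * Real.log a + Real.log (Real.log a)) := by
      intro c hc
      have heq : (a - 1) * (b ^ c * Real.log b) = (b - 1) * (a ^ c * Real.log a) := by
        have := hc; simp only [hq'def] at this; linarith
      have := congrArg Real.log heq
      rwa [Real.log_mul (by linarith) (by positivity),
        Real.log_mul (by positivity) (ne_of_gt hlb),
        Real.log_mul (by linarith) (by positivity),
        Real.log_mul (by positivity) (ne_of_gt hla),
        Real.log_rpow hb0, Real.log_rpow ha0] at this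
    intro c₁ c₂ h₁ h₂
    have k₁ := key c₁ h₁
    have k₂ := key c₂ h₂
    have : (c₁ - c₂) * (Real.log b - Real.log a) = 0 := by linarith
    rcases mul_eq_zero.1 this with h | h
    · linarith
    · exact absurd (by linarith) hlab
  have hq0 : q 0 = 0 := by simp [hqdef]
  have hq1 : q 1 = 0 := by simp [hqdef, Real.rpow_one]; ring
  -- Rolle-based: no three distinct roots
  have rolle3 : ∀ x y z : ℝ, x < y → y < z → q x = 0 → q y = 0 → q z = 0 → False := by
    intro x y z hxy hyz qx qy qz
    obtain ⟨c₁, hc₁, hc₁0⟩ := exists_hasDerivAt_eq_zero hxy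
      (fun w _ => (hderiv w).continuousAt.continuousWithinAt) (qx.trans qy.symm)
      (fun w _ => hderiv w)
    obtain ⟨c₂, hc₂, hc₂0⟩ := exists_hasDerivAt_eq_zero hyz
      (fun w _ => (hderiv w).continuousAt.continuousWithinAt) (qy.trans qz.symm)
      (fun w _ => hderiv w)
    have : c₁ = c₂ := hcrit c₁ c₂ hc₁0 hc₂0
    have : c₁ < c₂ := lt_trans hc₁.2 hc₂.1
    linarith
  constructor
  · intro hqt
    by_contra h
    push_neg at h
    obtain ⟨ht0, ht1⟩ := h
    have hqt' : q t = 0 := hqt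
    rcases lt_trichotomy t 0 with h | h | h
    · exact rolle3 t 0 1 h one_pos hqt' hq0 hq1
    · exact ht0 h
    · rcases lt_trichotomy t 1 with h' | h' | h'
      · exact rolle3 0 t 1 h h' hq0 hqt' hq1
      · exact ht1 h'
      · exact rolle3 0 1 t one_pos h' hq0 hq1 hqt'
  · rintro (rfl | rfl)
    · exact hq0
    · exact hq1
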